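/- arXiv:2212.14775 — 3 statements merged into one kernel-verified Lean document; each statement's English description precedes it below -/
import Mathlib

section
/- Let T ∈ ℝ^{ℓ×m×n} with slices T_1,…,T_ℓ, and let α be a real number with α ≥ min_{‖y‖=‖z‖=1} Σ_{i=1}^ℓ (yᵀ T_i z)². Then the system of quadratic equations in (t, y, z, u) ∈ ℝ × ℝ^m × ℝ^n × ℝ^ℓ given by: yᵀ T_i z = t u_i for i=1,…,ℓ; ‖y‖² + ‖z‖² = 2t²; ‖u‖² = α t²; and t² + ‖y‖² + ‖z‖² + ‖u‖² = 3 + α, has a solution if and only if α ≤ ‖T‖_σ². -/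
open Finset

noncomputable section

abbrev E (n : ℕ) := EuclideanSpace ℝ (Fin n)

/-- The bilinear form `yᵀ A z`. -/
def bil {m n : ℕ} (A : Matrix (Fin m) (Fin n) ℝ) (y : E m) (z : E n) : ℝ :=
  ∑ j, ∑ k, y j * A j k * z k

/-- Values of the trilinear form `⟨T, x⊗y⊗z⟩` over unit vectors; its greatest
element is the tensor spectral norm. -/
def specSet {l m n : ℕ} (T : Fin l → Matrix (Fin m) (Fin n) ℝ) : Set ℝ :=
  {v | ∃ x : E l, ∃ y : E m, ∃ z : E n, ‖x‖ = 1 ∧ ‖y‖ = 1 ∧ ‖z‖ = 1 ∧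
    v = ∑ i, x i * bil (T i) y z}

lemma normsq {n : ℕ} (x : E n) : ‖x‖ ^ 2 = ∑ i, x i ^ 2 := by
  rw [EuclideanSpace.norm_eq, Real.sq_sqrt (by positivity)]
  simp [sq_abs]

lemma bil_smul_left {m n : ℕ} (A : Matrix (Fin m) (Fin n) ℝ) (r : ℝ) (y : E m) (z : E n) :
    bil A (r • y) z = r * bil A y z := by
  simp only [bil, PiLp.smul_apply, smul_eq_mul, Finset.mul_sum]
  exact Finset.sum_congr rfl fun j _ => Finset.sum_congr rfl fun k _ => by ring

lemma bil_smul_right {m n : ℕ} (A : Matrix (Fin m) (Fin n) ℝ) (r : ℝ) (y : E m) (z : E n) :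
    bil A y (r • z) = r * bil A y z := by
  simp only [bil, PiLp.smul_apply, smul_eq_mul, Finset.mul_sum]
  exact Finset.sum_congr rfl fun j _ => Finset.sum_congr rfl fun k _ => by ring

lemma bil_neg_left {m n : ℕ} (A : Matrix (Fin m) (Fin n) ℝ) (y : E m) (z : E n) :
    bil A (-y) z = -bil A y z := by
  have := bil_smul_left A (-1) y z
  simpa using this

lemma bil_neg_right {m n : ℕ} (A : Matrix (Fin m) (Fin n) ℝ) (y : E m) (z : E n) :
    bil A y (-z) = -bil A y z := by
  have := bil_smul_right A (-1) y z
  simpa using this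

lemma bil_cont {m n : ℕ} (A : Matrix (Fin m) (Fin n) ℝ) :
    Continuous fun p : E m × E n => bil A p.1 p.2 := by
  unfold bil; fun_prop

lemma sigma_nonneg {l m n : ℕ} {T : Fin l → Matrix (Fin m) (Fin n) ℝ} {σ : ℝ}
    (hσ : IsGreatest (specSet T) σ) : 0 ≤ σ := by
  obtain ⟨x, y, z, hx, hy, hz, hv⟩ := hσ.1
  have hmem : -σ ∈ specSet T := by
    refine ⟨-x, y, z, by simpa using hx, hy, hz, ?_⟩
    rw [hv, ← Finset.sum_neg_distrib]
    exact Finset.sum_congr rfl fun i _ => by simp [PiLp.neg_apply]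
  have := hσ.2 hmem
  linarith

/-- On unit vectors the sum of squared slice values is at most σ². -/
lemma sumsq_unit_le {l m n : ℕ} {T : Fin l → Matrix (Fin m) (Fin n) ℝ} {σ : ℝ}
    (hσ : IsGreatest (specSet T) σ) (y : E m) (z : E n) (hy : ‖y‖ = 1) (hz : ‖z‖ = 1) :
    ∑ i, (bil (T i) y z) ^ 2 ≤ σ ^ 2 := by
  set c : E l := (WithLp.equiv 2 (Fin l → ℝ)).symm (fun i => bil (T i) y z) with hc
  have hci : ∀ i, c i = bil (T i) y z := fun i => rfl
  have hcn : ∑ i, (bil (T i) y z) ^ 2 = ‖c‖ ^ 2 := by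
    rw [normsq]
    exact Finset.sum_congr rfl fun i _ => by rw [hci]
  by_cases h0 : c = 0
  · rw [hcn, h0]
    simpa using sq_nonneg σ
  · have hcpos : (0:ℝ) < ‖c‖ := norm_pos_iff.mpr h0
    have hx : ‖(‖c‖⁻¹ • c : E l)‖ = 1 := norm_smul_inv_norm h0
    have hmem : ‖c‖ ∈ specSet T := by
      refine ⟨‖c‖⁻¹ • c, y, z, hx, hy, hz, ?_⟩
      have : ∑ i, (‖c‖⁻¹ • c : E l) i * bil (T i) y z = ‖c‖⁻¹ * ∑ i, (c i)^2 := by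
        rw [Finset.mul_sum]
        exact Finset.sum_congr rfl fun i _ => by rw [PiLp.smul_apply, hci, smul_eq_mul]; ring
      rw [this, ← normsq]
      field_simp
    have hle : ‖c‖ ≤ σ := hσ.2 hmem
    rw [hcn]
    exact pow_le_pow_left₀ (norm_nonneg c) hle 2

/-- For ‖y‖²+‖z‖²=2 the sum of squared slice values is at most σ². -/
lemma sumsq_le {l m n : ℕ} {T : Fin l → Matrix (Fin m) (Fin n) ℝ} {σ : ℝ}
    (hσ : IsGreatest (specSet T) σ) (y : E m) (z : E n) (h2 : ‖y‖ ^ 2 + ‖z‖ ^ 2 = 2) :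
    ∑ i, (bil (T i) y z) ^ 2 ≤ σ ^ 2 := by
  by_cases hy0 : y = 0
  · have : ∀ i, bil (T i) y z = 0 := fun i => by simp [bil, hy0]
    simp only [this]
    simpa using sq_nonneg σ
  by_cases hz0 : z = 0
  · have : ∀ i, bil (T i) y z = 0 := fun i => by simp [bil, hz0]
    simp only [this]
    simpa using sq_nonneg σ
  · have hyp : (0:ℝ) < ‖y‖ := norm_pos_iff.mpr hy0
    have hzp : (0:ℝ) < ‖z‖ := norm_pos_iff.mpr hz0
    set y' : E m := ‖y‖⁻¹ • y
    set z' : E n := ‖z‖⁻¹ • z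
    have hy' : ‖y'‖ = 1 := norm_smul_inv_norm hy0
    have hz' : ‖z'‖ = 1 := norm_smul_inv_norm hz0
    have key := sumsq_unit_le hσ y' z' hy' hz'
    have hrw : ∀ i, bil (T i) y' z' = ‖y‖⁻¹ * (‖z‖⁻¹ * bil (T i) y z) := fun i => by
      rw [bil_smul_left, bil_smul_right]
    have hexp : ∑ i, (bil (T i) y' z') ^ 2
        = (‖y‖⁻¹ * ‖z‖⁻¹)^2 * ∑ i, (bil (T i) y z) ^ 2 := by
      rw [Finset.mul_sum]
      exact Finset.sum_congr rfl fun i _ => by rw [hrw]; ring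
    rw [hexp] at key
    have hσ0 := sigma_nonneg hσ
    have hab : ‖y‖^2 * ‖z‖^2 ≤ 1 := by nlinarith [sq_nonneg (‖y‖^2 - ‖z‖^2)]
    have hS : ∑ i, (bil (T i) y z) ^ 2 ≤ ‖y‖^2 * ‖z‖^2 * σ^2 := by
      have h1 : (0:ℝ) < (‖y‖⁻¹ * ‖z‖⁻¹)^2 := by positivity
      calc ∑ i, (bil (T i) y z) ^ 2
          = (‖y‖^2 * ‖z‖^2) * ((‖y‖⁻¹ * ‖z‖⁻¹)^2 * ∑ i, (bil (T i) y z) ^ 2) := by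
            field_simp
        _ ≤ (‖y‖^2 * ‖z‖^2) * σ^2 := by
            apply mul_le_mul_of_nonneg_left key (by positivity)
        _ = ‖y‖^2 * ‖z‖^2 * σ^2 := rfl
    nlinarith [sq_nonneg σ]

/-- A path of unit vectors between (±a) and b. -/
lemma path_exists {m : ℕ} (a b : E m) (ha : ‖a‖ = 1) (hb : ‖b‖ = 1) :
    ∃ p : ℝ → E m, ContinuousOn p (Set.Icc 0 1) ∧ (∀ s ∈ Set.Icc (0:ℝ) 1, ‖p s‖ = 1)
      ∧ (p 0 = a ∨ p 0 = -a) ∧ p 1 = b := by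
  have hbne : b ≠ 0 := fun h => by simp [h] at hb
  obtain ⟨a', ha'eq, ha'ne, ha'n⟩ : ∃ a' : E m, (a' = a ∨ a' = -a) ∧ a' ≠ -b ∧ ‖a'‖ = 1 := by
    by_cases h : a = -b
    · refine ⟨-a, Or.inr rfl, ?_, by simpa using ha⟩
      rw [h, neg_neg]
      intro hbb
      apply hbne
      have : (2:ℝ) • b = 0 := by
        rw [two_smul]; nth_rewrite 1 [hbb]; simp
      simpa using (smul_eq_zero.mp this).resolve_left (by norm_num)
    · exact ⟨a, Or.inl rfl, h, ha⟩
  set q : ℝ → E m := fun s => (1 - s) • a' + s • b with hq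
  have hqc : Continuous q := by fun_prop
  have hqne : ∀ s ∈ Set.Icc (0:ℝ) 1, q s ≠ 0 := by
    rintro s ⟨hs0, hs1⟩ h0
    have heq : (1 - s) • a' = -(s • b) := by
      have := eq_neg_of_add_eq_zero_left h0
      exact this
    have hnorm : |1 - s| * ‖a'‖ = |s| * ‖b‖ := by
      have := congrArg norm heq
      simpa [norm_smul, Real.norm_eq_abs] using this
    rw [ha'n, hb, mul_one, mul_one, abs_of_nonneg (by linarith), abs_of_nonneg hs0] at hnorm
    have hs : s = 1/2 := by linarith
    apply ha'ne
    rw [hs] at heq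
    have h2 : ((2:ℝ) • ((1:ℝ) - 1/2) • a' : E m) = (2:ℝ) • -((1/2 : ℝ) • b) := by rw [heq]
    rw [smul_smul, smul_neg, smul_smul] at h2
    norm_num at h2
    exact h2
  refine ⟨fun s => ‖q s‖⁻¹ • q s, ?_, ?_, ?_, ?_⟩
  · exact ContinuousOn.smul ((hqc.norm.continuousOn).inv₀ fun s hs =>
      norm_ne_zero_iff.mpr (hqne s hs)) hqc.continuousOn
  · intro s hs
    exact norm_smul_inv_norm (hqne s hs)
  · have hq0 : q 0 = a' := by simp [hq]
    rcases ha'eq with h | h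
    · left; show ‖q 0‖⁻¹ • q 0 = a; rw [hq0, h, ha, inv_one, one_smul]
    · right; show ‖q 0‖⁻¹ • q 0 = -a
      rw [hq0, h, (by simpa using ha : ‖(-a : E m)‖ = 1), inv_one, one_smul]
  · have hq1 : q 1 = b := by simp [hq]
    show ‖q 1‖⁻¹ • q 1 = b
    rw [hq1, hb, inv_one, one_smul]

/-- the quadratic system is feasible iff α ≤ ‖T‖_σ². -/
theorem stmt1 {l m n : ℕ} (T : Fin l → Matrix (Fin m) (Fin n) ℝ) (σ μ α : ℝ)
    (hσ : IsGreatest (specSet T) σ)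
    (hμ : IsLeast {v : ℝ | ∃ y : E m, ∃ z : E n, ‖y‖ = 1 ∧ ‖z‖ = 1 ∧
      v = ∑ i, (bil (T i) y z) ^ 2} μ)
    (hαμ : μ ≤ α) :
    (∃ (t : ℝ) (y : E m) (z : E n) (u : E l),
      (∀ i, bil (T i) y z = t * u i) ∧
      ‖y‖ ^ 2 + ‖z‖ ^ 2 = 2 * t ^ 2 ∧
      ‖u‖ ^ 2 = α * t ^ 2 ∧
      t ^ 2 + ‖y‖ ^ 2 + ‖z‖ ^ 2 + ‖u‖ ^ 2 = 3 + α) ↔ α ≤ σ ^ 2 := by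
  have hμ0 : 0 ≤ μ := by
    obtain ⟨y₀, z₀, hy₀, hz₀, hμeq⟩ := hμ.1
    rw [hμeq]; positivity
  have hα0 : 0 ≤ α := le_trans hμ0 hαμ
  constructor
  · rintro ⟨t, y, z, u, h1, h2, h3, h4⟩
    have h30 : (0:ℝ) < 3 + α := by linarith
    have h5 : t ^ 2 * (3 + α) = 1 * (3 + α) := by linear_combination h4 - h2 - h3
    have ht : t ^ 2 = 1 := mul_right_cancel₀ (ne_of_gt h30) h5
    have hS : ∑ i, (bil (T i) y z) ^ 2 = α := by
      have he : ∀ i ∈ univ, bil (T i) y z ^ 2 = t ^ 2 * u i ^ 2 := fun i _ => by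
        rw [h1 i]; ring
      rw [Finset.sum_congr rfl he, ← Finset.mul_sum, ← normsq, h3, ht]
      ring
    have h2' : ‖y‖ ^ 2 + ‖z‖ ^ 2 = 2 := by rw [h2, ht]; ring
    have := sumsq_le hσ y z h2'
    linarith [hS ▸ this]
  · intro hα
    obtain ⟨y₀, z₀, hy₀, hz₀, hμeq⟩ := hμ.1
    obtain ⟨x₁, y₁, z₁, hx₁, hy₁, hz₁, hσeq⟩ := hσ.1
    -- the max point gives sum of squares ≥ σ² ≥ α
    have hF1 : α ≤ ∑ i, (bil (T i) y₁ z₁) ^ 2 := by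
      set c : E l := (WithLp.equiv 2 (Fin l → ℝ)).symm (fun i => bil (T i) y₁ z₁) with hc
      have hci : ∀ i, c i = bil (T i) y₁ z₁ := fun i => rfl
      have hcs : σ ≤ ‖c‖ := by
        have hcs1 : σ = ∑ i, x₁ i * c i := by
          rw [hσeq]
          exact Finset.sum_congr rfl fun i _ => by rw [hci]
        have hcs2 : ∑ i, x₁ i * c i ≤ ‖x₁‖ * ‖c‖ := by
          have := real_inner_le_norm x₁ c
          simpa [PiLp.inner_apply, RCLike.inner_apply, conj_trivial, mul_comm] using this
        rw [hx₁, one_mul] at hcs2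
        linarith [hcs1 ▸ hcs2]
      have hsq : σ ^ 2 ≤ ‖c‖ ^ 2 := pow_le_pow_left₀ (sigma_nonneg hσ) hcs 2
      rw [normsq] at hsq
      have : ∑ i, c i ^ 2 = ∑ i, (bil (T i) y₁ z₁) ^ 2 :=
        Finset.sum_congr rfl fun i _ => by rw [hci]
      linarith [this ▸ hsq]
    obtain ⟨py, hpyc, hpyn, hpy0, hpy1⟩ := path_exists y₀ y₁ hy₀ hy₁
    obtain ⟨pz, hpzc, hpzn, hpz0, hpz1⟩ := path_exists z₀ z₁ hz₀ hz₁
    set F : ℝ → ℝ := fun s => ∑ i, (bil (T i) (py s) (pz s)) ^ 2 with hF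
    have hFc : ContinuousOn F (Set.Icc 0 1) := by
      apply continuousOn_finset_sum
      intro i _
      exact (((bil_cont (T i)).comp_continuousOn (hpyc.prodMk hpzc)).pow 2)
    have hF0 : F 0 = μ := by
      have hsq' : ∀ i, bil (T i) (py 0) (pz 0) ^ 2 = bil (T i) y₀ z₀ ^ 2 := by
        intro i
        rcases hpy0 with h | h <;> rcases hpz0 with h' | h' <;>
          rw [h, h'] <;> simp [bil_neg_left, bil_neg_right]
      show ∑ i, (bil (T i) (py 0) (pz 0)) ^ 2 = μ
      rw [Finset.sum_congr rfl fun i _ => hsq' i, ← hμeq]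
    have hF1' : α ∈ Set.Icc (F 0) (F 1) := by
      constructor
      · rw [hF0]; exact hαμ
      · show α ≤ ∑ i, (bil (T i) (py 1) (pz 1)) ^ 2
        rw [hpy1, hpz1]; exact hF1
    obtain ⟨s, hs, hFs⟩ := intermediate_value_Icc (by norm_num : (0:ℝ) ≤ 1) hFc hF1'
    refine ⟨1, py s, pz s,
      (WithLp.equiv 2 (Fin l → ℝ)).symm (fun i => bil (T i) (py s) (pz s)),
      fun i => (one_mul _).symm, ?_, ?_, ?_⟩
    · rw [hpyn s hs, hpzn s hs]; norm_num
    · have hFs' : ∑ i, (bil (T i) (py s) (pz s)) ^ 2 = α := hFs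
      rw [normsq]
      have heq : ∑ i, ((WithLp.equiv 2 (Fin l → ℝ)).symm
          (fun i => bil (T i) (py s) (pz s)) : E l) i ^ 2
          = ∑ i, (bil (T i) (py s) (pz s)) ^ 2 := rfl
      rw [heq, hFs']; ring
    · have hFs' : ∑ i, (bil (T i) (py s) (pz s)) ^ 2 = α := hFs
      rw [hpyn s hs, hpzn s hs, normsq]
      have heq : ∑ i, ((WithLp.equiv 2 (Fin l → ℝ)).symm
          (fun i => bil (T i) (py s) (pz s)) : E l) i ^ 2
          = ∑ i, (bil (T i) (py s) (pz s)) ^ 2 := rfl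
      rw [heq, hFs']; ring
end
end

section
/- Let S ⊆ S^{ℓ−1} be a finite set of unit vectors in ℝ^ℓ such that for every unit vector x ∈ ℝ^ℓ there exists u ∈ S with uᵀx ≥ θ, where θ ∈ (0,1]. Then for any tensor T ∈ ℝ^{ℓ×m×n}, max_{x∈S} ‖T(x,•,•)‖_σ ≥ θ ‖T‖_σ, where T(x,•,•) = Σ_{i=1}^ℓ x_i T_i ∈ ℝ^{m×n} and ‖·‖_σ on a matrix denotes its largest singular value. -/
open Finset

noncomputable section

open RealInnerProductSpace in
lemma bil_sum_smul {l m n : ℕ} (a : Fin l → ℝ) (T : Fin l → Matrix (Fin m) (Fin n) ℝ)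
    (y : E m) (z : E n) :
    bil (∑ i, a i • T i) y z = ∑ i, a i * bil (T i) y z := by
  simp only [bil, Matrix.sum_apply, Matrix.smul_apply, smul_eq_mul, Finset.mul_sum,
    Finset.sum_mul]
  calc (∑ j, ∑ k, ∑ i, y j * (a i * T i j k) * z k)
      = ∑ j, ∑ i, ∑ k, y j * (a i * T i j k) * z k :=
        Finset.sum_congr rfl fun j _ => Finset.sum_comm
    _ = ∑ i, ∑ j, ∑ k, y j * (a i * T i j k) * z k := Finset.sum_comm
    _ = _ := Finset.sum_congr rfl fun i _ => Finset.sum_congr rfl fun j _ =>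
        Finset.sum_congr rfl fun k _ => by ring

open RealInnerProductSpace in
lemma inner_eq_sum_mul {l : ℕ} (x y : E l) : ⟪x, y⟫ = ∑ i, x i * y i := by
  simp [PiLp.inner_apply, RCLike.inner_apply, mul_comm]

open RealInnerProductSpace in
/-- if every unit x is θ-covered by S, then
max_{x∈S} ‖T(x,•,•)‖_σ ≥ θ‖T‖_σ. -/
theorem stmt8 {l m n : ℕ} (S : Set (E l)) (hSfin : S.Finite)
    (hSunit : ∀ u ∈ S, ‖u‖ = 1)
    (θ : ℝ) (hθ0 : 0 < θ) (hθ1 : θ ≤ 1)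
    (hcov : ∀ x : E l, ‖x‖ = 1 → ∃ u ∈ S, θ ≤ ∑ i, u i * x i)
    (T : Fin l → Matrix (Fin m) (Fin n) ℝ) (σ : ℝ) (g : E l → ℝ)
    (hσ : IsGreatest (specSet T) σ)
    (hg : ∀ x ∈ S, IsGreatest {v : ℝ | ∃ y : E m, ∃ z : E n,
      ‖y‖ = 1 ∧ ‖z‖ = 1 ∧ v = bil (∑ i, x i • T i) y z} (g x)) :
    ∃ x ∈ S, θ * σ ≤ g x := by
  obtain ⟨⟨x, y, z, hx, hy, hz, hv⟩, hub⟩ := hσ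
  set c : E l := WithLp.toLp 2 (fun i => bil (T i) y z) with hc
  have hσc : σ = ⟪x, c⟫ := by rw [inner_eq_sum_mul]; exact hv
  -- σ ≤ ‖c‖
  have hσle : σ ≤ ‖c‖ := by
    calc σ = ⟪x, c⟫ := hσc
      _ ≤ ‖x‖ * ‖c‖ := real_inner_le_norm x c
      _ = ‖c‖ := by rw [hx, one_mul]
  -- ‖c‖ ≤ σ
  have hcle : ‖c‖ ≤ σ := by
    rcases eq_or_ne c 0 with h0 | h0
    · rw [h0, norm_zero, hσc, h0, inner_zero_right]
    · have hcn : ‖c‖ ≠ 0 := fun h => h0 (norm_eq_zero.mp h)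
      have hxu : ‖(‖c‖⁻¹ • c : E l)‖ = 1 := by
        rw [norm_smul, norm_inv, norm_norm, inv_mul_cancel₀ hcn]
      refine hub ⟨‖c‖⁻¹ • c, y, z, hxu, hy, hz, ?_⟩
      have : ∑ i, (‖c‖⁻¹ • c) i * bil (T i) y z = ⟪‖c‖⁻¹ • c, c⟫ := by
        rw [inner_eq_sum_mul]
      rw [this, real_inner_smul_left, real_inner_self_eq_norm_sq]
      field_simp
  have hσeq : σ = ‖c‖ := le_antisymm hσle hcle
  -- equality in Cauchy-Schwarz: c = ‖c‖ • x
  have hCS : ⟪x, c⟫ = ‖x‖ * ‖c‖ := by rw [hx, one_mul, ← hσc, hσeq]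
  have hceq : c = ‖c‖ • x := by
    have := (inner_eq_norm_mul_iff_real).mp hCS
    rw [hx, one_smul] at this
    exact this.symm
  obtain ⟨u, huS, hu⟩ := hcov x hx
  refine ⟨u, huS, ?_⟩
  have hgu := hg u huS
  have hmem : bil (∑ i, u i • T i) y z ∈ {v : ℝ | ∃ y : E m, ∃ z : E n,
      ‖y‖ = 1 ∧ ‖z‖ = 1 ∧ v = bil (∑ i, u i • T i) y z} := ⟨y, z, hy, hz, rfl⟩
  have hle : bil (∑ i, u i • T i) y z ≤ g u := hgu.2 hmem
  have hval : bil (∑ i, u i • T i) y z = ⟪u, c⟫ := by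
    rw [bil_sum_smul, inner_eq_sum_mul]
  have hux : ⟪u, x⟫ = ∑ i, u i * x i := inner_eq_sum_mul u x
  calc θ * σ = σ * θ := mul_comm _ _
    _ ≤ σ * ⟪u, x⟫ := by
        apply mul_le_mul_of_nonneg_left (hux ▸ hu) (hσeq ▸ norm_nonneg c)
    _ = ⟪u, c⟫ := by rw [hceq, real_inner_smul_right, hσeq]
    _ = bil (∑ i, u i • T i) y z := hval.symm
    _ ≤ g u := hle
end
end

section
/- Let T = Σ_{i=1}^r λ_i x_i⊗y_i⊗z_i ∈ ℝ^{ℓ×m×n} with λ_i > 0, unit vectors x_i, y_i, z_i, and suppose (x_iᵀx_j)(y_iᵀy_j) = 0 and z_iᵀz_j = 0 for all i ≠ j. Then ‖T‖_σ = max_i λ_i and ‖T‖_* = Σ_i λ_i. -/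
open Finset

noncomputable section

/-- Frobenius inner product of two ℓ×m×n tensors given by slices. -/
def tinner {l m n : ℕ} (T Z : Fin l → Matrix (Fin m) (Fin n) ℝ) : ℝ :=
  ∑ i, ∑ j, ∑ k, T i j k * Z i j k

/-- Values Σ|λᵢ| over all rank-one decompositions of T; its least element is
the tensor nuclear norm ‖T‖_*. -/
def nucSet {l m n : ℕ} (T : Fin l → Matrix (Fin m) (Fin n) ℝ) : Set ℝ :=
  {v | ∃ (r : ℕ) (c : Fin r → ℝ) (xs : Fin r → E l) (ys : Fin r → E m)
      (zs : Fin r → E n),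
    (∀ a, ‖xs a‖ = 1 ∧ ‖ys a‖ = 1 ∧ ‖zs a‖ = 1) ∧
    (∀ i j k, T i j k = ∑ a, c a * xs a i * ys a j * zs a k) ∧
    v = ∑ a, |c a|}

/-! ### Auxiliary lemmas -/

lemma unit_sum {n : ℕ} (x : E n) (h : ‖x‖ = 1) : ∑ i, x i * x i = 1 := by
  have h2 : ‖x‖ ^ 2 = 1 := by rw [h]; norm_num
  rw [EuclideanSpace.norm_eq] at h2
  rw [Real.sq_sqrt (by positivity)] at h2
  simpa [Real.norm_eq_abs, sq_abs, sq] using h2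

lemma bessel {ι : Type*} [Fintype ι] {r : ℕ} (v : Fin r → ι → ℝ)
    (horth : ∀ a b, a ≠ b → ∑ i, v a i * v b i = 0)
    (hnorm : ∀ a, ∑ i, v a i * v a i = 1)
    (w : ι → ℝ) : ∑ a, (∑ i, w i * v a i) ^ 2 ≤ ∑ i, w i * w i := by
  obtain ⟨u, hu⟩ : ∃ u : Fin r → ℝ, ∀ a, u a = ∑ i, w i * v a i := ⟨_, fun _ => rfl⟩
  have key : (0:ℝ) ≤ ∑ i, (w i - ∑ a, u a * v a i) ^ 2 :=
    Finset.sum_nonneg fun i _ => sq_nonneg _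
  have c1 : ∑ i, w i * (∑ a, u a * v a i) = ∑ a, u a ^ 2 := by
    simp only [Finset.mul_sum]
    rw [Finset.sum_comm]
    refine Finset.sum_congr rfl fun a _ => ?_
    calc ∑ i, w i * (u a * v a i) = ∑ i, u a * (w i * v a i) :=
          Finset.sum_congr rfl fun i _ => by ring
      _ = u a * ∑ i, w i * v a i := by rw [← Finset.mul_sum]
      _ = u a ^ 2 := by rw [← hu]; ring
  have c2 : ∑ i, (∑ a, u a * v a i) ^ 2 = ∑ a, u a ^ 2 := by
    have step : ∀ i : ι, (∑ a, u a * v a i) ^ 2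
        = ∑ a, ∑ b, (u a * v a i) * (u b * v b i) := by
      intro i; rw [sq, Finset.sum_mul_sum]
    rw [Finset.sum_congr rfl fun i _ => step i]
    rw [Finset.sum_comm]
    refine Finset.sum_congr rfl fun a _ => ?_
    rw [Finset.sum_comm]
    rw [Finset.sum_eq_single a]
    · calc ∑ i, u a * v a i * (u a * v a i)
          = ∑ i, (u a * u a) * (v a i * v a i) := Finset.sum_congr rfl fun i _ => by ring
        _ = (u a * u a) * ∑ i, v a i * v a i := by rw [← Finset.mul_sum]
        _ = u a ^ 2 := by rw [hnorm a]; ring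
    · intro b _ hb
      calc ∑ i, u a * v a i * (u b * v b i)
          = ∑ i, (u a * u b) * (v a i * v b i) := Finset.sum_congr rfl fun i _ => by ring
        _ = (u a * u b) * ∑ i, v a i * v b i := by rw [← Finset.mul_sum]
        _ = 0 := by rw [horth a b (Ne.symm hb)]; ring
    · simp
  have e1 : ∑ i, (w i - ∑ a, u a * v a i) ^ 2
      = ∑ i, w i * w i - 2 * ∑ a, u a ^ 2 + ∑ a, u a ^ 2 := by
    have expand : ∀ i : ι, (w i - ∑ a, u a * v a i) ^ 2
        = w i * w i - 2 * (w i * (∑ a, u a * v a i)) + (∑ a, u a * v a i) ^ 2 := by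
      intro i; ring
    rw [Finset.sum_congr rfl fun i _ => expand i]
    rw [Finset.sum_add_distrib, Finset.sum_sub_distrib, ← Finset.mul_sum, c1, c2]
  rw [e1] at key
  have hle : ∑ a, u a ^ 2 ≤ ∑ i, w i * w i := by linarith
  calc ∑ a, (∑ i, w i * v a i) ^ 2 = ∑ a, u a ^ 2 :=
        Finset.sum_congr rfl fun a _ => by rw [hu]
    _ ≤ _ := hle

lemma cauchy_abs {r : ℕ} (u w : Fin r → ℝ) (hu : ∑ a, u a ^ 2 ≤ 1)
    (hw : ∑ a, w a ^ 2 ≤ 1) : ∑ a, |u a| * |w a| ≤ 1 := by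
  have h1 : (∑ a, |u a| * |w a|) ^ 2 ≤ (∑ a, |u a| ^ 2) * (∑ a, |w a| ^ 2) :=
    Finset.sum_mul_sq_le_sq_mul_sq univ _ _
  simp only [sq_abs] at h1
  have h0 : 0 ≤ ∑ a, |u a| * |w a| :=
    Finset.sum_nonneg fun a _ => mul_nonneg (abs_nonneg _) (abs_nonneg _)
  nlinarith [Finset.sum_nonneg (fun a (_ : a ∈ univ) => sq_nonneg (u a)),
    Finset.sum_nonneg (fun a (_ : a ∈ univ) => sq_nonneg (w a))]

lemma pairBessel {l m r : ℕ} (xs : Fin r → E l) (ys : Fin r → E m)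
    (horth : ∀ a b, a ≠ b → (∑ i, xs a i * xs b i) * (∑ j, ys a j * ys b j) = 0)
    (hx : ∀ a, ∑ i, xs a i * xs a i = 1) (hy : ∀ a, ∑ j, ys a j * ys a j = 1)
    (x : E l) (y : E m) (hxu : ∑ i, x i * x i = 1) (hyu : ∑ j, y j * y j = 1) :
    ∑ a, ((∑ i, x i * xs a i) * (∑ j, y j * ys a j)) ^ 2 ≤ 1 := by
  have prodsum : ∀ (f : Fin l → ℝ) (g : Fin m → ℝ),
      ∑ p : Fin l × Fin m, f p.1 * g p.2 = (∑ i, f i) * (∑ j, g j) := by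
    intro f g
    calc ∑ p : Fin l × Fin m, f p.1 * g p.2 = ∑ i, ∑ j, f i * g j :=
          Fintype.sum_prod_type _
      _ = ∑ i, f i * ∑ j, g j := Finset.sum_congr rfl fun i _ => by rw [← Finset.mul_sum]
      _ = (∑ i, f i) * ∑ j, g j := by rw [← Finset.sum_mul]
  have h := bessel (ι := Fin l × Fin m) (fun a p => xs a p.1 * ys a p.2)
    (fun a b hab => by
      calc ∑ p : Fin l × Fin m, (xs a p.1 * ys a p.2) * (xs b p.1 * ys b p.2)
          = ∑ p : Fin l × Fin m, (fun i => xs a i * xs b i) p.1 * (fun j => ys a j * ys b j) p.2 :=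
            Finset.sum_congr rfl fun p _ => by ring
        _ = (∑ i, xs a i * xs b i) * (∑ j, ys a j * ys b j) :=
            prodsum (fun i => xs a i * xs b i) (fun j => ys a j * ys b j)
        _ = 0 := horth a b hab)
    (fun a => by
      calc ∑ p : Fin l × Fin m, (xs a p.1 * ys a p.2) * (xs a p.1 * ys a p.2)
          = ∑ p : Fin l × Fin m, (fun i => xs a i * xs a i) p.1 * (fun j => ys a j * ys a j) p.2 :=
            Finset.sum_congr rfl fun p _ => by ring
        _ = (∑ i, xs a i * xs a i) * (∑ j, ys a j * ys a j) :=
            prodsum (fun i => xs a i * xs a i) (fun j => ys a j * ys a j)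
        _ = 1 := by rw [hx a, hy a]; norm_num)
    (fun p => x p.1 * y p.2)
  have e1 : ∀ a : Fin r, ∑ p : Fin l × Fin m, (x p.1 * y p.2) * (xs a p.1 * ys a p.2)
      = (∑ i, x i * xs a i) * (∑ j, y j * ys a j) := by
    intro a
    calc ∑ p : Fin l × Fin m, (x p.1 * y p.2) * (xs a p.1 * ys a p.2)
        = ∑ p : Fin l × Fin m, (fun i => x i * xs a i) p.1 * (fun j => y j * ys a j) p.2 :=
          Finset.sum_congr rfl fun p _ => by ring
      _ = (∑ i, x i * xs a i) * (∑ j, y j * ys a j) :=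
          prodsum (fun i => x i * xs a i) (fun j => y j * ys a j)
  have e2 : ∑ p : Fin l × Fin m, (x p.1 * y p.2) * (x p.1 * y p.2) = 1 := by
    calc ∑ p : Fin l × Fin m, (x p.1 * y p.2) * (x p.1 * y p.2)
        = ∑ p : Fin l × Fin m, (fun i => x i * x i) p.1 * (fun j => y j * y j) p.2 :=
          Finset.sum_congr rfl fun p _ => by ring
      _ = (∑ i, x i * x i) * (∑ j, y j * y j) := prodsum (fun i => x i * x i) (fun j => y j * y j)
      _ = 1 := by rw [hxu, hyu]; norm_num
  calc ∑ a, ((∑ i, x i * xs a i) * (∑ j, y j * ys a j)) ^ 2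
      = ∑ a, (∑ p : Fin l × Fin m, (x p.1 * y p.2) * (xs a p.1 * ys a p.2)) ^ 2 :=
        Finset.sum_congr rfl fun a _ => by rw [e1 a]
    _ ≤ ∑ p : Fin l × Fin m, (x p.1 * y p.2) * (x p.1 * y p.2) := h
    _ = 1 := e2

lemma pull3 {ι κ μ ν : Type*} [Fintype ι] [Fintype κ] [Fintype μ] [Fintype ν]
    (F : ι → κ → μ → ν → ℝ) :
    ∑ i, ∑ j, ∑ k, ∑ b, F i j k b = ∑ b, ∑ i, ∑ j, ∑ k, F i j k b := by
  calc ∑ i, ∑ j, ∑ k, ∑ b, F i j k b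
      = ∑ i, ∑ j, ∑ b, ∑ k, F i j k b :=
        Finset.sum_congr rfl fun i _ => Finset.sum_congr rfl fun j _ => Finset.sum_comm
    _ = ∑ i, ∑ b, ∑ j, ∑ k, F i j k b :=
        Finset.sum_congr rfl fun i _ => Finset.sum_comm
    _ = ∑ b, ∑ i, ∑ j, ∑ k, F i j k b := Finset.sum_comm

lemma rev3 {ι κ μ : Type*} [Fintype ι] [Fintype κ] [Fintype μ]
    (F : ι → κ → μ → ℝ) :
    ∑ i, ∑ j, ∑ k, F i j k = ∑ k, ∑ j, ∑ i, F i j k := by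
  calc ∑ i, ∑ j, ∑ k, F i j k
      = ∑ i, ∑ k, ∑ j, F i j k := Finset.sum_congr rfl fun i _ => Finset.sum_comm
    _ = ∑ k, ∑ i, ∑ j, F i j k := Finset.sum_comm
    _ = ∑ k, ∑ j, ∑ i, F i j k := Finset.sum_congr rfl fun k _ => Finset.sum_comm

lemma expand3 {l m n r : ℕ} (c : Fin r → ℝ) (X : Fin r → E l) (Y : Fin r → E m)
    (Z : Fin r → E n) (T : Fin l → Matrix (Fin m) (Fin n) ℝ)
    (hT : ∀ i j k, T i j k = ∑ a, c a * X a i * Y a j * Z a k)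
    (x : E l) (y : E m) (z : E n) :
    ∑ i, x i * bil (T i) y z
      = ∑ a, c a * ((∑ i, x i * X a i) * ((∑ j, y j * Y a j) * (∑ k, z k * Z a k))) := by
  simp only [bil, hT, Finset.mul_sum, Finset.sum_mul]
  rw [pull3]
  refine Finset.sum_congr rfl fun a _ => ?_
  rw [rev3]
  exact Finset.sum_congr rfl fun k _ => Finset.sum_congr rfl fun j _ =>
    Finset.sum_congr rfl fun i _ => by ring

lemma tinner_eq {l m n r' : ℕ} (T W : Fin l → Matrix (Fin m) (Fin n) ℝ)
    (d : Fin r' → ℝ) (X : Fin r' → E l) (Y : Fin r' → E m) (Z : Fin r' → E n)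
    (hW : ∀ i j k, W i j k = ∑ b, d b * X b i * Y b j * Z b k) :
    tinner T W = ∑ b, d b * (∑ i, X b i * bil (T i) (Y b) (Z b)) := by
  unfold tinner
  calc ∑ i, ∑ j, ∑ k, T i j k * W i j k
      = ∑ i, ∑ j, ∑ k, ∑ b, T i j k * (d b * X b i * Y b j * Z b k) := by
        refine Finset.sum_congr rfl fun i _ => Finset.sum_congr rfl fun j _ =>
          Finset.sum_congr rfl fun k _ => ?_
        rw [hW, Finset.mul_sum]
    _ = ∑ b, ∑ i, ∑ j, ∑ k, T i j k * (d b * X b i * Y b j * Z b k) := pull3 _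
    _ = _ := by
        refine Finset.sum_congr rfl fun b _ => ?_
        simp only [bil, Finset.mul_sum]
        refine Finset.sum_congr rfl fun i _ => Finset.sum_congr rfl fun j _ =>
          Finset.sum_congr rfl fun k _ => by ring

lemma tinner_comm {l m n : ℕ} (T W : Fin l → Matrix (Fin m) (Fin n) ℝ) :
    tinner T W = tinner W T := by
  unfold tinner
  exact Finset.sum_congr rfl fun i _ => Finset.sum_congr rfl fun j _ =>
    Finset.sum_congr rfl fun k _ => by ring

/-- for the special orthogonal decomposition,
‖T‖_σ = maxᵢ λᵢ and ‖T‖_* = Σᵢ λᵢ. -/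
theorem stmt15 {l m n r : ℕ} (hr : 0 < r)
    (lam : Fin r → ℝ) (hlam : ∀ a, 0 < lam a)
    (xs : Fin r → E l) (ys : Fin r → E m) (zs : Fin r → E n)
    (hunit : ∀ a, ‖xs a‖ = 1 ∧ ‖ys a‖ = 1 ∧ ‖zs a‖ = 1)
    (horth : ∀ a b, a ≠ b →
      (∑ i, xs a i * xs b i) * (∑ j, ys a j * ys b j) = 0 ∧
      (∑ k, zs a k * zs b k) = 0)
    (T : Fin l → Matrix (Fin m) (Fin n) ℝ)
    (hT : ∀ i j k, T i j k = ∑ a, lam a * xs a i * ys a j * zs a k)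
    (σ N : ℝ)
    (hσ : IsGreatest (specSet T) σ)
    (hN : IsLeast (nucSet T) N) :
    IsGreatest (Set.range lam) σ ∧ N = ∑ a, lam a := by
  have hxs : ∀ a, ∑ i, xs a i * xs a i = 1 := fun a => unit_sum _ (hunit a).1
  have hys : ∀ a, ∑ j, ys a j * ys a j = 1 := fun a => unit_sum _ (hunit a).2.1
  have hzs : ∀ a, ∑ k, zs a k * zs a k = 1 := fun a => unit_sum _ (hunit a).2.2
  have zbes : ∀ z : E n, ‖z‖ = 1 → ∑ a, (∑ k, z k * zs a k) ^ 2 ≤ 1 := by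
    intro z hz
    have h : ∑ a, (∑ k, z k * zs a k) ^ 2 ≤ ∑ k, z k * z k :=
      bessel (fun a k => zs a k) (fun a b hab => (horth a b hab).2) hzs (fun k => z k)
    rwa [unit_sum z hz] at h
  -- value of the trilinear form at (xs b, ys b, zs b) is lam b
  have heval : ∀ b, ∑ i, xs b i * bil (T i) (ys b) (zs b) = lam b := by
    intro b
    rw [expand3 lam xs ys zs T hT]
    rw [Finset.sum_eq_single b]
    · rw [hxs b, hys b, hzs b]; ring
    · intro a _ hab
      have e1 : ∑ i, xs b i * xs a i = ∑ i, xs a i * xs b i :=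
        Finset.sum_congr rfl fun i _ => mul_comm _ _
      have e2 : ∑ j, ys b j * ys a j = ∑ j, ys a j * ys b j :=
        Finset.sum_congr rfl fun j _ => mul_comm _ _
      rw [e1, e2]
      have h0 := (horth a b hab).1
      calc lam a * ((∑ i, xs a i * xs b i) * ((∑ j, ys a j * ys b j) * (∑ k, zs b k * zs a k)))
          = lam a * (((∑ i, xs a i * xs b i) * (∑ j, ys a j * ys b j)) * (∑ k, zs b k * zs a k)) := by
            ring
        _ = 0 := by rw [h0]; ring
    · simp
  have hmem : ∀ b, lam b ∈ specSet T := fun b =>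
    ⟨xs b, ys b, zs b, (hunit b).1, (hunit b).2.1, (hunit b).2.2, (heval b).symm⟩
  obtain ⟨a0, -, ha0⟩ := Finset.exists_max_image (univ : Finset (Fin r)) lam
    ⟨⟨0, hr⟩, Finset.mem_univ _⟩
  -- every element of specSet is at most lam a0
  have hub : ∀ v ∈ specSet T, v ≤ lam a0 := by
    rintro v ⟨x, y, z, hx1, hy1, hz1, rfl⟩
    rw [expand3 lam xs ys zs T hT x y z]
    have hU := pairBessel xs ys (fun a b hab => (horth a b hab).1) hxs hys x y
      (unit_sum x hx1) (unit_sum y hy1)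
    have hW := zbes z hz1
    have habs := cauchy_abs _ _ hU hW
    calc ∑ a, lam a * ((∑ i, x i * xs a i) * ((∑ j, y j * ys a j) * (∑ k, z k * zs a k)))
        ≤ ∑ a, lam a0 * (|(∑ i, x i * xs a i) * (∑ j, y j * ys a j)| * |∑ k, z k * zs a k|) := by
          refine Finset.sum_le_sum fun a _ => ?_
          have h1 := (hlam a).le
          have h2 := ha0 a (Finset.mem_univ a)
          have h3 : (∑ i, x i * xs a i) * ((∑ j, y j * ys a j) * (∑ k, z k * zs a k))
              ≤ |(∑ i, x i * xs a i) * (∑ j, y j * ys a j)| * |∑ k, z k * zs a k| := by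
            rw [← abs_mul]
            calc (∑ i, x i * xs a i) * ((∑ j, y j * ys a j) * (∑ k, z k * zs a k))
                = (∑ i, x i * xs a i) * (∑ j, y j * ys a j) * (∑ k, z k * zs a k) := by ring
              _ ≤ |(∑ i, x i * xs a i) * (∑ j, y j * ys a j) * (∑ k, z k * zs a k)| :=
                  le_abs_self _
          have h4 : (0:ℝ) ≤ |(∑ i, x i * xs a i) * (∑ j, y j * ys a j)| * |∑ k, z k * zs a k| :=
            mul_nonneg (abs_nonneg _) (abs_nonneg _)
          nlinarith
      _ = lam a0 * ∑ a, |(∑ i, x i * xs a i) * (∑ j, y j * ys a j)| * |∑ k, z k * zs a k| := by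
          rw [← Finset.mul_sum]
      _ ≤ lam a0 * 1 := mul_le_mul_of_nonneg_left habs (hlam a0).le
      _ = lam a0 := mul_one _
  have hσub : ∀ v ∈ Set.range lam, v ≤ σ := by
    rintro v ⟨b, rfl⟩; exact hσ.2 (hmem b)
  have hσeq : σ = lam a0 :=
    le_antisymm (hub σ hσ.1) (hσ.2 (hmem a0))
  refine ⟨⟨⟨a0, hσeq.symm⟩, hσub⟩, ?_⟩
  -- nuclear part
  obtain ⟨W, hW⟩ : ∃ W : Fin l → Matrix (Fin m) (Fin n) ℝ,
      ∀ i j k, W i j k = ∑ a, (1:ℝ) * xs a i * ys a j * zs a k :=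
    ⟨fun i => Matrix.of fun j k => ∑ a, (1:ℝ) * xs a i * ys a j * zs a k,
      fun _ _ _ => rfl⟩
  have h1 : tinner T W = ∑ a, lam a := by
    rw [tinner_eq T W (fun _ => 1) xs ys zs hW]
    exact Finset.sum_congr rfl fun b _ => by rw [heval b]; ring
  have hle : N ≤ ∑ a, lam a := hN.2
    ⟨r, lam, xs, ys, zs, hunit, hT,
      Finset.sum_congr rfl fun a _ => (abs_of_pos (hlam a)).symm⟩
  obtain ⟨r', c, X', Y', Z', hu', hT', hNval⟩ := hN.1
  have h3 : tinner W T = ∑ b, c b * (∑ i, X' b i * bil (W i) (Y' b) (Z' b)) :=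
    tinner_eq W T c X' Y' Z' hT'
  have h4 : ∀ b, |∑ i, X' b i * bil (W i) (Y' b) (Z' b)| ≤ 1 := by
    intro b
    rw [expand3 (fun _ => (1:ℝ)) xs ys zs W hW (X' b) (Y' b) (Z' b)]
    have hU := pairBessel xs ys (fun a b' hab => (horth a b' hab).1) hxs hys (X' b) (Y' b)
      (unit_sum _ (hu' b).1) (unit_sum _ (hu' b).2.1)
    have hWb := zbes (Z' b) (hu' b).2.2
    have habs := cauchy_abs _ _ hU hWb
    calc |∑ a, (1:ℝ) * ((∑ i, X' b i * xs a i) * ((∑ j, Y' b j * ys a j) * (∑ k, Z' b k * zs a k)))|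
        ≤ ∑ a, |(1:ℝ) * ((∑ i, X' b i * xs a i) * ((∑ j, Y' b j * ys a j) * (∑ k, Z' b k * zs a k)))| :=
          Finset.abs_sum_le_sum_abs _ _
      _ = ∑ a, |(∑ i, X' b i * xs a i) * (∑ j, Y' b j * ys a j)| * |∑ k, Z' b k * zs a k| := by
          refine Finset.sum_congr rfl fun a _ => ?_
          rw [show (1:ℝ) * ((∑ i, X' b i * xs a i) * ((∑ j, Y' b j * ys a j) * (∑ k, Z' b k * zs a k)))
              = ((∑ i, X' b i * xs a i) * (∑ j, Y' b j * ys a j)) * (∑ k, Z' b k * zs a k) from by ring,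
            abs_mul]
      _ ≤ 1 := habs
  have h5 : ∑ a, lam a ≤ ∑ b, |c b| := by
    calc ∑ a, lam a = tinner T W := h1.symm
      _ = tinner W T := tinner_comm T W
      _ = ∑ b, c b * (∑ i, X' b i * bil (W i) (Y' b) (Z' b)) := h3
      _ ≤ ∑ b, |c b| := by
          refine Finset.sum_le_sum fun b _ => ?_
          have hb := h4 b
          calc c b * (∑ i, X' b i * bil (W i) (Y' b) (Z' b))
              ≤ |c b * (∑ i, X' b i * bil (W i) (Y' b) (Z' b))| := le_abs_self _
            _ = |c b| * |∑ i, X' b i * bil (W i) (Y' b) (Z' b)| := abs_mul _ _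
            _ ≤ |c b| * 1 := mul_le_mul_of_nonneg_left hb (abs_nonneg _)
            _ = |c b| := mul_one _
  have hge : ∑ a, lam a ≤ N := by rw [hNval]; exact h5
  exact le_antisymm hle hge
end
end
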